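/- Every word in GL(g) is a Lyndon word (i.e. it is strictly smaller, in the lexicographic order, than each of its proper nonempty suffixes), and the map GL(g) → P sending a word w[i_1,…,i_k] to |w| = α_{i_1} + ⋯ + α_{i_k} is a bijection from GL(g) onto the set Φ⁺ of reduced positive roots. -/

import Mathlib

set_option maxHeartbeats 1000000

namespace OSP

attribute [local instance] Classical.propDecidable

/-- The orthosymplectic type: `b`, `c`, or `d` (i.e. `𝔟(m|n)`, `𝔠(m|n)`, `𝔡(m|n)`). -/
inductive GType
  | b | c | d
deriving DecidableEq

/-- The base field `k = ℚ(q)`. -/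
abbrev K : Type := RatFunc ℚ

/-- The indeterminate `q`. -/
noncomputable def q : K := RatFunc.X

/-- `r_𝔤`: `2` for type `b`, `1` for types `c`, `d`. -/
def rg : GType → ℤ
  | .b => 2
  | _ => 1

/-- The weight lattice `P`, the free abelian group with basis `δ_a`, `a ∈ 𝕀 = {1,…,m+n}`;
an index `a : Fin (m+n)` corresponds to the paper's index `a+1`. -/
abbrev P (m n : ℕ) := Fin (m + n) → ℤ

/-- `δ_i` for a paper index `i ∈ {1,…,m+n}`. -/
def dlt (m n : ℕ) (i : ℕ) : P m n := fun a => if (a : ℕ) + 1 = i then 1 else 0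

/-- `ε_a` for a paper index `a` (also used for `ε_i`, `i ∈ I`): `0` if `a ≤ m`, else `1`. -/
def eps (m : ℕ) (a : ℕ) : ℕ := if a ≤ m then 0 else 1

/-- The symmetric bilinear form on `P`, `(δ_a|δ_b) = (−1)^{ε_a} r_𝔤 δ_{ab}`. -/
def form (g : GType) (m n : ℕ) (μ ν : P m n) : ℤ :=
  ∑ a : Fin (m + n), (-1 : ℤ) ^ eps m ((a : ℕ) + 1) * rg g * μ a * ν a

/-- `𝚚_a = (−1)^{ε_a} q^{(−1)^{ε_a} r_𝔤}` for a paper index `a ∈ {1,…,m+n}`. -/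
noncomputable def qA (g : GType) (m : ℕ) (a : ℕ) : K :=
  (-1 : K) ^ eps m a * q ^ ((-1 : ℤ) ^ eps m a * rg g)

/-- The symmetric biadditive map `𝐪(μ,ν) = ∏_a 𝚚_a^{μ_a ν_a}`. -/
noncomputable def qf (g : GType) (m n : ℕ) (μ ν : P m n) : K :=
  ∏ a : Fin (m + n), qA g m ((a : ℕ) + 1) ^ (μ a * ν a)

/-- The simple roots `α_i`, `i ∈ I = {0,1,…,m+n−1}`. -/
def alphaR (g : GType) (m n : ℕ) (i : ℕ) : P m n :=
  if i = 0 then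
    (match g with
      | GType.b => -dlt m n 1
      | GType.c => -((2 : ℤ) • dlt m n 1)
      | GType.d => -(dlt m n 1 + dlt m n 2))
  else dlt m n i - dlt m n (i + 1)

/-- `q_i = q^{|(α_i|α_i)|/2}` for `i ≠ m` and `q_m = q^{r_𝔤}`. -/
noncomputable def qi (g : GType) (m n : ℕ) (i : ℕ) : K :=
  if i = m then q ^ rg g
  else q ^ (((form g m n (alphaR g m n i) (alphaR g m n i)).natAbs / 2 : ℕ))

/-- The quantum integer `[s]_z = (z^s − z^{−s})/(z − z^{−1})`. -/
noncomputable def qn (z : K) (s : ℕ) : K := (z ^ s - z⁻¹ ^ s) / (z - z⁻¹)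

/-- `[s]_z! = [s]_z [s−1]_z ⋯ [1]_z`. -/
noncomputable def qnfac (z : K) (s : ℕ) : K := ∏ t ∈ Finset.range s, qn z (t + 1)

/-- `{s}_z = ((−z)^s − z^{−s})/(−z − z^{−1})`. -/
noncomputable def qb (z : K) (s : ℕ) : K := ((-z) ^ s - z⁻¹ ^ s) / (-z - z⁻¹)

/-- `{s}_z!`. -/
noncomputable def qbfac (z : K) (s : ℕ) : K := ∏ t ∈ Finset.range s, qb z (t + 1)

/-- Words in the alphabet `w_0 < w_1 < ⋯ < w_{m+n−1}`. -/
abbrev Word (m n : ℕ) := List (Fin (m + n))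

/-- The lexicographic order on words in which a proper prefix precedes the word itself. -/
def wlt {m n : ℕ} (u v : Word m n) : Prop := List.Lex (· < ·) u v

/-- The word `w[i,…,j] = w_i w_{i+1} ⋯ w_j` (empty if `j < i`). -/
def wrange (m n : ℕ) (i j : ℕ) : Word m n :=
  (List.finRange (m + n)).filter fun t => decide (i ≤ (t : ℕ) ∧ (t : ℕ) ≤ j)

/-- The set `𝒢ℒ(𝔤)` of good Lyndon words. -/
def GLw (g : GType) (m n : ℕ) : Set (Word m n) :=
  match g with
  | GType.b =>
      {w | ∃ i j : ℕ, i ≤ j ∧ j ≤ m + n - 1 ∧ w = wrange m n i j} ∪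
      {w | ∃ j k : ℕ, j < k ∧ k ≤ m + n - 1 ∧ w = wrange m n 0 j ++ wrange m n 0 k}
  | GType.c =>
      {w | ∃ i j : ℕ, i ≤ j ∧ j ≤ m + n - 1 ∧ w = wrange m n i j} ∪
      {w | ∃ j k : ℕ, 1 ≤ j ∧ j < k ∧ k ≤ m + n - 1 ∧
            w = wrange m n 0 k ++ wrange m n 1 j} ∪
      {w | ∃ k : ℕ, 1 ≤ k ∧ k ≤ m - 1 ∧ w = wrange m n 0 k ++ wrange m n 1 k}
  | GType.d =>
      {w | w = wrange m n 0 0} ∪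
      {w | ∃ i : ℕ, 2 ≤ i ∧ i ≤ m + n - 1 ∧ w = wrange m n 0 0 ++ wrange m n 2 i} ∪
      {w | ∃ i j : ℕ, 1 ≤ i ∧ i ≤ j ∧ j ≤ m + n - 1 ∧ w = wrange m n i j} ∪
      {w | ∃ j k : ℕ, 1 ≤ j ∧ j < k ∧ k ≤ m + n - 1 ∧
            w = wrange m n 0 0 ++ wrange m n 2 k ++ wrange m n 1 j} ∪
      {w | ∃ k : ℕ, m ≤ k ∧ k ≤ m + n - 1 ∧
            w = wrange m n 0 0 ++ wrange m n 2 k ++ wrange m n 1 k}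

/-- The weight `|w| = α_{i_1} + ⋯ + α_{i_k}` of a word `w = w_{i_1}⋯w_{i_k}`. -/
def wwt (g : GType) (m n : ℕ) (w : Word m n) : P m n :=
  (w.map fun t => alphaR g m n (t : ℕ)).sum

/-- The coefficient of `−δ_i` in the root `(i,i) = −(2/r_𝔤)δ_i`. -/
def diagC (g : GType) : ℤ := if g = GType.b then 1 else 2

/-- The root denoted `(i,j)` in the paper: `−δ_i − δ_j` for `i < j`, and `−(2/r_𝔤)δ_i`
for `i = j`. -/
def rt (g : GType) (m n : ℕ) (i j : ℕ) : P m n :=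
  if i = j then -(diagC g • dlt m n i) else -(dlt m n i + dlt m n j)

/-- The condition for `(i,j)` to be an element of `Φ⁺(𝔲)`. -/
def uIdx (g : GType) (m n : ℕ) (i j : ℕ) : Prop :=
  (1 ≤ i ∧ i < j ∧ j ≤ m + n) ∨
    (i = j ∧ match g with
      | GType.b => 1 ≤ i ∧ i ≤ m + n
      | GType.c => 1 ≤ i ∧ i ≤ m
      | GType.d => m + 1 ≤ i ∧ i ≤ m + n)

/-- The set `Φ⁺(𝔲)`. -/
def PhiU (g : GType) (m n : ℕ) : Set (P m n) :=
  {p | ∃ i j : ℕ, uIdx g m n i j ∧ p = rt g m n i j}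

/-- The set `Φ⁺(𝔩) = {δ_i − δ_j : 1 ≤ i < j ≤ m+n}`. -/
def PhiL (m n : ℕ) : Set (P m n) :=
  {p | ∃ i j : ℕ, 1 ≤ i ∧ i < j ∧ j ≤ m + n ∧ p = dlt m n i - dlt m n j}

/-- The set `Φ⁺ = Φ⁺(𝔲) ∪ Φ⁺(𝔩)` of reduced positive roots. -/
def PhiPlus (g : GType) (m n : ℕ) : Set (P m n) := PhiU g m n ∪ PhiL m n

/-- The set `Φ` of all roots of `𝔤` (reduced positive roots, their negatives, and in
type `b` also the non-reduced roots `±2δ_u`, `m+1 ≤ u ≤ m+n`). -/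
def PhiAll (g : GType) (m n : ℕ) : Set (P m n) :=
  PhiPlus g m n ∪ (fun p => -p) '' PhiPlus g m n ∪
    {p | g = GType.b ∧ ∃ u : ℕ, m + 1 ≤ u ∧ u ≤ m + n ∧
      (p = (2 : ℤ) • dlt m n u ∨ p = -((2 : ℤ) • dlt m n u))}

/-- `A₀ ⊆ ℚ(q)`: the subring of rational functions regular at `q = 0`. -/
def A0 : Set K :=
  {f | ∃ p r : Polynomial ℚ, r.coeff 0 ≠ 0 ∧
    f = algebraMap (Polynomial ℚ) K p / algebraMap (Polynomial ℚ) K r}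

/-- The linear order `≺` on `Φ⁺(𝔲)`, written on index pairs. -/
def precU (g : GType) (i1 j1 i2 j2 : ℕ) : Prop :=
  match g with
  | GType.b => i1 < i2 ∨ (i1 = i2 ∧ j1 < j2)
  | _ => j1 < j2 ∨ (j1 = j2 ∧ i1 < i2)

end OSP
namespace OSP

section Lists

lemma drop_range' : ∀ (k s len : ℕ), (List.range' s len).drop k = List.range' (s + k) (len - k) := by
  intro k
  induction k with
  | zero => intro s len; simp
  | succ k ih =>
    intro s len
    cases len with
    | zero => simp
    | succ len =>
      rw [List.range'_succ, List.drop_succ_cons, ih]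
      congr 1 <;> omega

lemma range'_cons (s len : ℕ) (h : 1 ≤ len) :
    List.range' s len = s :: List.range' (s + 1) (len - 1) := by
  obtain ⟨l, rfl⟩ : ∃ l, len = l + 1 := ⟨len - 1, by omega⟩
  rw [List.range'_succ]
  simp

lemma filter_range (i j : ℕ) : ∀ N, (List.range N).filter (fun t => decide (i ≤ t ∧ t ≤ j)) =
    List.range' i (min (j + 1) N - i) := by
  intro N
  induction N with
  | zero => simp
  | succ N ih =>
    rw [List.range_succ, List.filter_append, ih, List.filter_singleton]
    by_cases h1 : N ≤ j
    · by_cases h2 : i ≤ N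
      · have e1 : min (j + 1) N = N := by omega
        have e2 : min (j + 1) (N + 1) = N + 1 := by omega
        have e3 : N + 1 - i = (N - i) + 1 := by omega
        rw [e1, e2, e3, List.range'_concat]
        have : (decide (i ≤ N ∧ N ≤ j)) = true := by simp; omega
        rw [this]
        simp only [cond_true]
        congr 2
        omega
      · have e1 : min (j + 1) N - i = 0 := by omega
        have e2 : min (j + 1) (N + 1) - i = 0 := by omega
        have : (decide (i ≤ N ∧ N ≤ j)) = false := by simp; omega
        rw [e1, e2, this]
        simp
    · have e1 : min (j + 1) N = min (j + 1) (N + 1) := by omega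
      have : (decide (i ≤ N ∧ N ≤ j)) = false := by simp; omega
      rw [e1, this]
      simp

lemma wrange_val {m n : ℕ} (i j : ℕ) (hj : j < m + n) :
    (wrange m n i j).map Fin.val = List.range' i (j + 1 - i) := by
  have h1 : wrange m n i j =
      (List.finRange (m + n)).filter ((fun t => decide (i ≤ t ∧ t ≤ j)) ∘ Fin.val) := rfl
  rw [h1, ← List.filter_map, List.map_coe_finRange_eq_range, filter_range]
  congr 1
  omega

lemma wrange_nil {m n : ℕ} (i j : ℕ) (h : j < i) : wrange m n i j = [] := by
  rw [wrange, List.filter_eq_nil_iff]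
  intro a _
  simp
  omega

end Lists

section Weights

variable (g : GType) (m n : ℕ)

/-- `δ_i − δ_j`. -/
def S1 (i j : ℕ) : P m n := dlt m n i - dlt m n j
/-- `−δ_i − δ_j`. -/
def S2 (i j : ℕ) : P m n := -(dlt m n i + dlt m n j)
/-- `−(2/r) δ_i`. -/
def S3 (i : ℕ) : P m n := -(diagC g • dlt m n i)

def wS1 (i j : ℕ) : Word m n := wrange m n i (j - 1)

def wS2 (i j : ℕ) : Word m n :=
  match g with
  | GType.b => wrange m n 0 (i - 1) ++ wrange m n 0 (j - 1)
  | GType.c => wrange m n 0 (j - 1) ++ wrange m n 1 (i - 1)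
  | GType.d => wrange m n 0 0 ++ wrange m n 2 (j - 1) ++ wrange m n 1 (i - 1)

def wS3 (i : ℕ) : Word m n :=
  match g with
  | GType.b => wrange m n 0 (i - 1)
  | GType.c => wrange m n 0 (i - 1) ++ wrange m n 1 (i - 1)
  | GType.d => wrange m n 0 0 ++ wrange m n 2 (i - 1) ++ wrange m n 1 (i - 1)

/-- The diagonal range condition for `Φ⁺(𝔲)`. -/
def d3 (i : ℕ) : Prop :=
  match g with
  | GType.b => 1 ≤ i ∧ i ≤ m + n
  | GType.c => 1 ≤ i ∧ i ≤ m
  | GType.d => m + 1 ≤ i ∧ i ≤ m + n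

variable {g m n}

lemma wwt_append (u v : Word m n) :
    wwt g m n (u ++ v) = wwt g m n u + wwt g m n v := by
  simp [wwt]

lemma alphaR_pos (i : ℕ) (h : 1 ≤ i) :
    alphaR g m n i = dlt m n i - dlt m n (i + 1) := by
  unfold alphaR
  rw [if_neg (by omega)]

lemma vwt_tele : ∀ (len i : ℕ), 1 ≤ i →
    ((List.range' i len).map (alphaR g m n)).sum = dlt m n i - dlt m n (i + len) := by
  intro len
  induction len with
  | zero => intro i _; simp
  | succ len ih =>
    intro i hi
    rw [List.range'_succ, List.map_cons, List.sum_cons, ih (i + 1) (by omega),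
      alphaR_pos i hi]
    have : i + 1 + len = i + (len + 1) := by omega
    rw [this]
    abel

lemma wwt_eq (w : Word m n) :
    wwt g m n w = ((w.map Fin.val).map (alphaR g m n)).sum := by
  rw [wwt]
  induction w with
  | nil => rfl
  | cons a w ih => simpa using ih

lemma wwt_wrange (i j : ℕ) (hi : 1 ≤ i) (hj : j < m + n) (hij : i ≤ j + 1) :
    wwt g m n (wrange m n i j) = dlt m n i - dlt m n (j + 1) := by
  rw [wwt_eq, wrange_val i j hj, vwt_tele _ i hi]
  have e : i + (j + 1 - i) = j + 1 := by omega
  rw [e]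

lemma wwt_wrange0 (j : ℕ) (hj : j < m + n) :
    wwt g m n (wrange m n 0 j) = alphaR g m n 0 + (dlt m n 1 - dlt m n (j + 1)) := by
  rw [wwt_eq, wrange_val 0 j hj]
  have : j + 1 - 0 = j + 1 := by omega
  rw [this, List.range'_succ, List.map_cons, List.sum_cons, vwt_tele j (0+1) (by omega)]
  have e : 0 + 1 + j = j + 1 := by omega
  rw [e]

lemma wwt_wS1 (i j : ℕ) (h1 : 1 ≤ i) (h2 : i < j) (h3 : j ≤ m + n) :
    wwt g m n (wS1 m n i j) = S1 m n i j := by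
  rw [wS1, wwt_wrange i (j-1) h1 (by omega) (by omega), S1]
  have e : j - 1 + 1 = j := by omega
  rw [e]

lemma wwt_wS2 (i j : ℕ) (h1 : 1 ≤ i) (h2 : i < j) (h3 : j ≤ m + n) :
    wwt g m n (wS2 g m n i j) = S2 m n i j := by
  have hm1 : (0:ℕ) < m + n := by omega
  cases g with
  | b =>
    rw [show wS2 GType.b m n i j = wrange m n 0 (i-1) ++ wrange m n 0 (j-1) from rfl,
      wwt_append, wwt_wrange0 (i-1) (by omega), wwt_wrange0 (j-1) (by omega)]
    have e1 : i - 1 + 1 = i := by omega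
    have e2 : j - 1 + 1 = j := by omega
    rw [e1, e2, show alphaR GType.b m n 0 = -dlt m n 1 from rfl, S2]
    abel
  | c =>
    rw [show wS2 GType.c m n i j = wrange m n 0 (j-1) ++ wrange m n 1 (i-1) from rfl,
      wwt_append, wwt_wrange0 (j-1) (by omega), wwt_wrange 1 (i-1) (by omega) (by omega) (by omega)]
    have e1 : i - 1 + 1 = i := by omega
    have e2 : j - 1 + 1 = j := by omega
    rw [e1, e2, show alphaR GType.c m n 0 = -((2:ℤ) • dlt m n 1) from rfl, S2]
    abel
  | d =>
    rw [show wS2 GType.d m n i j = wrange m n 0 0 ++ wrange m n 2 (j-1) ++ wrange m n 1 (i-1) from rfl,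
      wwt_append, wwt_append, wwt_wrange0 0 hm1,
      wwt_wrange 2 (j-1) (by omega) (by omega) (by omega),
      wwt_wrange 1 (i-1) (by omega) (by omega) (by omega)]
    have e1 : i - 1 + 1 = i := by omega
    have e2 : j - 1 + 1 = j := by omega
    rw [e1, e2, show alphaR GType.d m n 0 = -(dlt m n 1 + dlt m n 2) from rfl, S2]
    abel

lemma wwt_wS3 (i : ℕ) (h1 : 1 ≤ i) (h3 : i ≤ m + n) (hd : g = GType.d → 2 ≤ i) :
    wwt g m n (wS3 g m n i) = S3 g m n i := by
  have hm1 : (0:ℕ) < m + n := by omega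
  cases g with
  | b =>
    rw [show wS3 GType.b m n i = wrange m n 0 (i-1) from rfl, wwt_wrange0 (i-1) (by omega)]
    have e1 : i - 1 + 1 = i := by omega
    rw [e1, show alphaR GType.b m n 0 = -dlt m n 1 from rfl, S3,
      show diagC GType.b = 1 from rfl, one_smul]
    abel
  | c =>
    rw [show wS3 GType.c m n i = wrange m n 0 (i-1) ++ wrange m n 1 (i-1) from rfl,
      wwt_append, wwt_wrange0 (i-1) (by omega),
      wwt_wrange 1 (i-1) (by omega) (by omega) (by omega)]
    have e1 : i - 1 + 1 = i := by omega
    rw [e1, show alphaR GType.c m n 0 = -((2:ℤ) • dlt m n 1) from rfl, S3,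
      show diagC GType.c = 2 from rfl]
    abel
  | d =>
    have h2i : 2 ≤ i := hd rfl
    rw [show wS3 GType.d m n i = wrange m n 0 0 ++ wrange m n 2 (i-1) ++ wrange m n 1 (i-1) from rfl,
      wwt_append, wwt_append, wwt_wrange0 0 hm1,
      wwt_wrange 2 (i-1) (by omega) (by omega) (by omega),
      wwt_wrange 1 (i-1) (by omega) (by omega) (by omega)]
    have e1 : i - 1 + 1 = i := by omega
    rw [e1, show alphaR GType.d m n 0 = -(dlt m n 1 + dlt m n 2) from rfl, S3,
      show diagC GType.d = 2 from rfl]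
    abel

end Weights

section Inj

variable {g : GType} {m n : ℕ}

lemma diagC_cases (g : GType) : diagC g = 1 ∨ diagC g = 2 := by
  cases g <;> simp [diagC]

lemma dlt_mk {m n : ℕ} (x i : ℕ) (h1 : 1 ≤ x) (hx : x - 1 < m + n) :
    dlt m n i ⟨x - 1, hx⟩ = if x = i then 1 else 0 := by
  show (if (⟨x - 1, hx⟩ : Fin (m + n)).val + 1 = i then (1:ℤ) else 0) = _
  by_cases hxi : x = i
  · rw [if_pos (show (⟨x - 1, hx⟩ : Fin (m + n)).val + 1 = i by simp; omega), if_pos hxi]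
  · rw [if_neg (show ¬ (⟨x - 1, hx⟩ : Fin (m + n)).val + 1 = i by simp; omega), if_neg hxi]

lemma S1_inj {i j i' j' : ℕ} (h1 : 1 ≤ i) (h2 : i < j) (h3 : j ≤ m + n)
    (h1' : 1 ≤ i') (h2' : i' < j') (h3' : j' ≤ m + n)
    (h : S1 m n i j = S1 m n i' j') : i = i' ∧ j = j' := by
  constructor
  · have e1 := congrFun h ⟨i - 1, by omega⟩
    simp only [S1, Pi.sub_apply] at e1
    rw [dlt_mk i i h1 (by omega), dlt_mk i j h1 (by omega), dlt_mk i i' h1 (by omega),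
      dlt_mk i j' h1 (by omega)] at e1
    split_ifs at e1 <;> omega
  · have e2 := congrFun h ⟨j - 1, by omega⟩
    simp only [S1, Pi.sub_apply] at e2
    rw [dlt_mk j i (by omega) (by omega), dlt_mk j j (by omega) (by omega),
      dlt_mk j i' (by omega) (by omega), dlt_mk j j' (by omega) (by omega)] at e2
    split_ifs at e2 <;> omega

lemma S2_inj {i j i' j' : ℕ} (h1 : 1 ≤ i) (h2 : i < j) (h3 : j ≤ m + n)
    (h1' : 1 ≤ i') (h2' : i' < j') (h3' : j' ≤ m + n)
    (h : S2 m n i j = S2 m n i' j') : i = i' ∧ j = j' := by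
  have hii : i = i' := by
    have e1 := congrFun h ⟨i - 1, by omega⟩
    have e3 := congrFun h ⟨i' - 1, by omega⟩
    simp only [S2, Pi.neg_apply, Pi.add_apply] at e1 e3
    rw [dlt_mk i i h1 (by omega), dlt_mk i j h1 (by omega), dlt_mk i i' h1 (by omega),
      dlt_mk i j' h1 (by omega)] at e1
    rw [dlt_mk i' i h1' (by omega), dlt_mk i' j h1' (by omega), dlt_mk i' i' h1' (by omega),
      dlt_mk i' j' h1' (by omega)] at e3
    split_ifs at e1 e3 <;> omega
  subst hii
  have hjj : j = j' := by
    have e2 := congrFun h ⟨j - 1, by omega⟩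
    have e4 := congrFun h ⟨j' - 1, by omega⟩
    simp only [S2, Pi.neg_apply, Pi.add_apply] at e2 e4
    rw [dlt_mk j i (by omega) (by omega), dlt_mk j j (by omega) (by omega),
      dlt_mk j j' (by omega) (by omega)] at e2
    rw [dlt_mk j' i (by omega) (by omega), dlt_mk j' j (by omega) (by omega),
      dlt_mk j' j' (by omega) (by omega)] at e4
    split_ifs at e2 e4 <;> omega
  exact ⟨rfl, hjj⟩

lemma S3_inj {i i' : ℕ} (h1 : 1 ≤ i) (h3 : i ≤ m + n)
    (h1' : 1 ≤ i') (h3' : i' ≤ m + n)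
    (h : S3 g m n i = S3 g m n i') : i = i' := by
  have e1 := congrFun h ⟨i - 1, by omega⟩
  rcases diagC_cases g with hc | hc <;>
  · simp only [S3, Pi.neg_apply, Pi.smul_apply, smul_eq_mul, dlt, hc] at e1
    split_ifs at e1 <;> omega

lemma S1_ne_S2 {i j i' j' : ℕ} (h1 : 1 ≤ i) (h2 : i < j) (h3 : j ≤ m + n)
    (h : S1 m n i j = S2 m n i' j') : False := by
  have e1 := congrFun h ⟨i - 1, by omega⟩
  simp only [S1, S2, Pi.sub_apply, Pi.neg_apply, Pi.add_apply, dlt] at e1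
  split_ifs at e1 <;> omega

lemma S1_ne_S3 {i j i' : ℕ} (h1 : 1 ≤ i) (h2 : i < j) (h3 : j ≤ m + n)
    (h : S1 m n i j = S3 g m n i') : False := by
  have e1 := congrFun h ⟨i - 1, by omega⟩
  rcases diagC_cases g with hc | hc <;>
  · simp only [S1, S3, Pi.sub_apply, Pi.neg_apply, Pi.smul_apply, smul_eq_mul, dlt, hc] at e1
    split_ifs at e1 <;> omega

lemma S2_ne_S3 {i j i' : ℕ} (h1 : 1 ≤ i) (h2 : i < j) (h3 : j ≤ m + n)
    (h1' : 1 ≤ i') (h3' : i' ≤ m + n)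
    (h : S2 m n i j = S3 g m n i') : False := by
  have e1 := congrFun h ⟨i - 1, by omega⟩
  have e2 := congrFun h ⟨j - 1, by omega⟩
  rcases diagC_cases g with hc | hc <;>
  · simp only [S2, S3, Pi.neg_apply, Pi.add_apply, Pi.smul_apply, smul_eq_mul, dlt, hc] at e1 e2
    split_ifs at e1 e2 <;> omega

end Inj

section Mem

variable {g : GType} {m n : ℕ}

lemma memS1 (hm : 2 ≤ m) (hn : 1 ≤ n) (i j : ℕ) (h1 : 1 ≤ i) (h2 : i < j) (h3 : j ≤ m + n) :
    wS1 m n i j ∈ GLw g m n := by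
  cases g with
  | b => exact Or.inl ⟨i, j - 1, by omega, by omega, rfl⟩
  | c => exact Or.inl (Or.inl ⟨i, j - 1, by omega, by omega, rfl⟩)
  | d => exact Or.inl (Or.inl (Or.inr ⟨i, j - 1, by omega, by omega, by omega, rfl⟩))

lemma memS2 (hm : 2 ≤ m) (hn : 1 ≤ n) (i j : ℕ) (h1 : 1 ≤ i) (h2 : i < j) (h3 : j ≤ m + n) :
    wS2 g m n i j ∈ GLw g m n := by
  cases g with
  | b => exact Or.inr ⟨i - 1, j - 1, by omega, by omega, rfl⟩
  | c =>
    by_cases hi : i = 1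
    · subst hi
      refine Or.inl (Or.inl ⟨0, j - 1, by omega, by omega, ?_⟩)
      show wrange m n 0 (j-1) ++ wrange m n 1 0 = _
      rw [wrange_nil 1 0 (by omega), List.append_nil]
    · exact Or.inl (Or.inr ⟨i - 1, j - 1, by omega, by omega, by omega, rfl⟩)
  | d =>
    by_cases hi : i = 1
    · subst hi
      by_cases hj : j = 2
      · subst hj
        refine Or.inl (Or.inl (Or.inl (Or.inl ?_)))
        show wrange m n 0 0 ++ wrange m n 2 1 ++ wrange m n 1 0 = _
        rw [wrange_nil 2 1 (by omega), wrange_nil 1 0 (by omega),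
          List.append_nil, List.append_nil]
      · refine Or.inl (Or.inl (Or.inl (Or.inr ⟨j - 1, by omega, by omega, ?_⟩)))
        show wrange m n 0 0 ++ wrange m n 2 (j-1) ++ wrange m n 1 0 = _
        rw [wrange_nil 1 0 (by omega), List.append_nil]
    · exact Or.inl (Or.inr ⟨i - 1, j - 1, by omega, by omega, by omega, rfl⟩)

lemma memS3 (hm : 2 ≤ m) (hn : 1 ≤ n) (i : ℕ) (h : d3 g m n i) :
    wS3 g m n i ∈ GLw g m n := by
  cases g with
  | b =>
    obtain ⟨h1, h2⟩ := h
    exact Or.inl ⟨0, i - 1, by omega, by omega, rfl⟩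
  | c =>
    obtain ⟨h1, h2⟩ := h
    by_cases hi : i = 1
    · subst hi
      refine Or.inl (Or.inl ⟨0, 0, by omega, by omega, ?_⟩)
      show wrange m n 0 0 ++ wrange m n 1 0 = _
      rw [wrange_nil 1 0 (by omega), List.append_nil]
    · exact Or.inr ⟨i - 1, by omega, by omega, rfl⟩
  | d =>
    obtain ⟨h1, h2⟩ := h
    exact Or.inr ⟨i - 1, by omega, by omega, rfl⟩

lemma classify (hm : 2 ≤ m) (hn : 1 ≤ n) {w : Word m n} (hw : w ∈ GLw g m n) :
    (∃ i j, 1 ≤ i ∧ i < j ∧ j ≤ m + n ∧ w = wS1 m n i j) ∨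
    (∃ i j, 1 ≤ i ∧ i < j ∧ j ≤ m + n ∧ w = wS2 g m n i j) ∨
    (∃ i, d3 g m n i ∧ w = wS3 g m n i) := by
  cases g with
  | b =>
    rcases hw with ⟨i, j, h1, h2, hwe⟩ | ⟨j, k, h1, h2, hwe⟩
    · by_cases hi : i = 0
      · subst hi
        refine Or.inr (Or.inr ⟨j + 1, ⟨by omega, by omega⟩, ?_⟩)
        show w = wrange m n 0 (j + 1 - 1)
        rw [Nat.add_sub_cancel]; exact hwe
      · refine Or.inl ⟨i, j + 1, by omega, by omega, by omega, ?_⟩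
        show w = wrange m n i (j + 1 - 1)
        rw [Nat.add_sub_cancel]; exact hwe
    · refine Or.inr (Or.inl ⟨j + 1, k + 1, by omega, by omega, by omega, ?_⟩)
      show w = wrange m n 0 (j + 1 - 1) ++ wrange m n 0 (k + 1 - 1)
      rw [Nat.add_sub_cancel, Nat.add_sub_cancel]; exact hwe
  | c =>
    rcases hw with (⟨i, j, h1, h2, hwe⟩ | ⟨j, k, h1, h2, h3, hwe⟩) | ⟨k, h1, h2, hwe⟩
    · by_cases hi : i = 0
      · subst hi
        by_cases hj : j = 0
        · subst hj
          refine Or.inr (Or.inr ⟨1, ⟨le_refl 1, by omega⟩, ?_⟩)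
          show w = wrange m n 0 (1 - 1) ++ wrange m n 1 (1 - 1)
          rw [wrange_nil 1 (1-1) (by omega), List.append_nil]; exact hwe
        · refine Or.inr (Or.inl ⟨1, j + 1, by omega, by omega, by omega, ?_⟩)
          show w = wrange m n 0 (j + 1 - 1) ++ wrange m n 1 (1 - 1)
          rw [Nat.add_sub_cancel, wrange_nil 1 (1-1) (by omega), List.append_nil]
          exact hwe
      · refine Or.inl ⟨i, j + 1, by omega, by omega, by omega, ?_⟩
        show w = wrange m n i (j + 1 - 1)
        rw [Nat.add_sub_cancel]; exact hwe
    · refine Or.inr (Or.inl ⟨j + 1, k + 1, by omega, by omega, by omega, ?_⟩)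
      show w = wrange m n 0 (k + 1 - 1) ++ wrange m n 1 (j + 1 - 1)
      rw [Nat.add_sub_cancel, Nat.add_sub_cancel]; exact hwe
    · refine Or.inr (Or.inr ⟨k + 1, ⟨by omega, by omega⟩, ?_⟩)
      show w = wrange m n 0 (k + 1 - 1) ++ wrange m n 1 (k + 1 - 1)
      rw [Nat.add_sub_cancel]; exact hwe
  | d =>
    rcases hw with (((hwe | ⟨i, h1, h2, hwe⟩) | ⟨i, j, h1, h2, h3, hwe⟩) |
      ⟨j, k, h1, h2, h3, hwe⟩) | ⟨k, h1, h2, hwe⟩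
    · refine Or.inr (Or.inl ⟨1, 2, by omega, by omega, by omega, ?_⟩)
      show w = wrange m n 0 0 ++ wrange m n 2 (2 - 1) ++ wrange m n 1 (1 - 1)
      rw [wrange_nil 2 (2-1) (by omega), wrange_nil 1 (1-1) (by omega),
        List.append_nil, List.append_nil]
      exact hwe
    · refine Or.inr (Or.inl ⟨1, i + 1, by omega, by omega, by omega, ?_⟩)
      show w = wrange m n 0 0 ++ wrange m n 2 (i + 1 - 1) ++ wrange m n 1 (1 - 1)
      rw [Nat.add_sub_cancel, wrange_nil 1 (1-1) (by omega), List.append_nil]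
      exact hwe
    · refine Or.inl ⟨i, j + 1, by omega, by omega, by omega, ?_⟩
      show w = wrange m n i (j + 1 - 1)
      rw [Nat.add_sub_cancel]; exact hwe
    · refine Or.inr (Or.inl ⟨j + 1, k + 1, by omega, by omega, by omega, ?_⟩)
      show w = wrange m n 0 0 ++ wrange m n 2 (k + 1 - 1) ++ wrange m n 1 (j + 1 - 1)
      rw [Nat.add_sub_cancel, Nat.add_sub_cancel]; exact hwe
    · refine Or.inr (Or.inr ⟨k + 1, ⟨by omega, by omega⟩, ?_⟩)
      show w = wrange m n 0 0 ++ wrange m n 2 (k + 1 - 1) ++ wrange m n 1 (k + 1 - 1)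
      rw [Nat.add_sub_cancel]; exact hwe

end Mem

section Lyndon

variable {m n : ℕ}

lemma nat_lex_cons {a b : ℕ} {u v : List ℕ}
    (h : List.Lex (· < ·) (a :: u) (b :: v)) :
    a < b ∨ (a = b ∧ List.Lex (· < ·) u v) := by
  cases h with
  | rel h1 => exact Or.inl h1
  | cons h1 => exact Or.inr ⟨rfl, h1⟩

lemma lex_map_val {u v : Word m n}
    (h : List.Lex (· < ·) (u.map Fin.val) (v.map Fin.val)) : wlt u v := by
  induction u generalizing v with
  | nil =>
    cases v with
    | nil => cases h
    | cons b v' => exact List.Lex.nil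
  | cons a u' ih =>
    cases v with
    | nil => rw [List.map_cons] at h; cases h
    | cons b v' =>
      rw [List.map_cons, List.map_cons] at h
      rcases nat_lex_cons h with h1 | ⟨h1, h2⟩
      · exact List.Lex.rel h1
      · have hab : a = b := Fin.val_injective h1
        subst hab
        exact List.Lex.cons (ih h2)

lemma lex_append_left {α : Type*} {r : α → α → Prop} (c : List α) {u v : List α}
    (h : List.Lex r u v) : List.Lex r (c ++ u) (c ++ v) := by
  induction c with
  | nil => exact h
  | cons a c ih => exact List.Lex.cons ih

lemma lyn_head {α : Type*} {r : α → α → Prop} {a : α} {rest t s : List α}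
    (hw : a :: rest = t ++ s) (hx : ∀ x ∈ rest, r a x) (ht : t ≠ []) (hs : s ≠ []) :
    List.Lex r (a :: rest) s := by
  obtain ⟨b, t', rfl⟩ := List.exists_cons_of_ne_nil ht
  obtain ⟨c, s', rfl⟩ := List.exists_cons_of_ne_nil hs
  rw [List.cons_append] at hw
  have h1 : a = b := (List.cons_eq_cons.mp hw).1
  have h2 : rest = t' ++ c :: s' := (List.cons_eq_cons.mp hw).2
  refine List.Lex.rel (hx c ?_)
  rw [h2]
  exact List.mem_append.mpr (Or.inr (List.mem_cons_self (a := c) (l := s')))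

/-- The special case of the Lyndon property for the type `b` words
`w[0,…,j]w[0,…,k]`, at the level of value lists. -/
lemma lyn_b {i j : ℕ} (hi : 1 ≤ i) (hij : i < j) {tL sL : List ℕ}
    (hsplit : List.range' 0 i ++ List.range' 0 j = tL ++ sL)
    (ht : tL ≠ []) (hs : sL ≠ []) :
    List.Lex (· < ·) (List.range' 0 i ++ List.range' 0 j) sL := by
  set L := List.range' 0 i ++ List.range' 0 j with hL
  have hlen : L.length = i + j := by simp [hL]
  have hsL : sL = L.drop tL.length := by rw [hsplit, List.drop_left]
  set p := tL.length with hp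
  have hp1 : 1 ≤ p := by
    rw [hp]
    have := List.length_pos_iff.mpr ht
    omega
  have hplen : p + sL.length = i + j := by
    have := congrArg List.length hsplit
    simp at this
    omega
  have hslen : 1 ≤ sL.length := by
    have := List.length_pos_iff.mpr hs
    omega
  have hLcons : L = 0 :: (List.range' 1 (i - 1) ++ List.range' 0 j) := by
    rw [hL, range'_cons 0 i hi]
    simp
  rcases lt_trichotomy p i with hpi | hpi | hpi
  · -- suffix starts inside the first block
    have : sL = List.range' p (i - p) ++ List.range' 0 j := by
      rw [hsL, hL, List.drop_append_of_le_length (by simp; omega), drop_range']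
      simp
    rw [this, range'_cons p (i - p) (by omega), hLcons]
    exact List.Lex.rel (by omega)
  · -- suffix is exactly the second block
    have hsL2 : sL = List.range' 0 j := by
      rw [hsL, hL, hpi, List.drop_append_of_le_length (by simp), drop_range']
      simp
    have hj2 : List.range' 0 j = List.range' 0 i ++ List.range' i (j - i) := by
      have := List.range'_append (s := 0) (m := i) (n := j - i) (step := 1)
      simp at this
      rw [this]
      congr 1
      omega
    rw [hsL2, hL]
    nth_rewrite 2 [hj2]
    refine lex_append_left _ ?_
    rw [range'_cons 0 j (by omega), range'_cons i (j - i) (by omega)]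
    exact List.Lex.rel (by omega)
  · -- suffix starts inside the second block
    have : sL = List.range' (p - i) (j - (p - i)) := by
      rw [hsL, hL, List.drop_append]
      have e1 : (List.range' 0 i).drop p = [] := by
        rw [List.drop_eq_nil_iff]
        simp
        omega
      have e2 : (List.range' 0 i).length = i := by simp
      rw [e1, List.nil_append, e2, drop_range']
      simp
    rw [this, range'_cons (p - i) (j - (p - i)) (by omega), hLcons]
    refine List.Lex.rel (by omega)

end Lyndon

section Main

variable {g : GType} {m n : ℕ}

lemma d3_bounds (hm : 2 ≤ m) (hn : 1 ≤ n) {i : ℕ} (h : d3 g m n i) :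
    1 ≤ i ∧ i ≤ m + n ∧ (g = GType.d → 2 ≤ i) := by
  cases g with
  | b =>
    obtain ⟨ha, hb⟩ := h
    exact ⟨ha, hb, fun hh => by cases hh⟩
  | c =>
    obtain ⟨ha, hb⟩ := h
    exact ⟨ha, by omega, fun hh => by cases hh⟩
  | d =>
    obtain ⟨ha, hb⟩ := h
    exact ⟨by omega, hb, fun _ => by omega⟩

lemma map_wS1 {i j : ℕ} (h1 : 1 ≤ i) (h2 : i < j) (h3 : j ≤ m + n) :
    (wS1 m n i j).map Fin.val = List.range' i (j - i) := by
  have hj : j - 1 < m + n := by omega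
  rw [wS1, wrange_val i (j - 1) hj]
  congr 1
  omega

lemma map_wS2_b {i j : ℕ} (h1 : 1 ≤ i) (h2 : i < j) (h3 : j ≤ m + n) :
    (wS2 GType.b m n i j).map Fin.val = List.range' 0 i ++ List.range' 0 j := by
  rw [show wS2 GType.b m n i j = wrange m n 0 (i-1) ++ wrange m n 0 (j-1) from rfl,
    List.map_append, wrange_val (m := m) (n := n) 0 (i-1) (by omega), wrange_val (m := m) (n := n) 0 (j-1) (by omega)]
  have e1 : i - 1 + 1 - 0 = i := by omega
  have e2 : j - 1 + 1 - 0 = j := by omega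
  rw [e1, e2]

lemma map_wS2_c {i j : ℕ} (h1 : 1 ≤ i) (h2 : i < j) (h3 : j ≤ m + n) :
    (wS2 GType.c m n i j).map Fin.val =
      0 :: (List.range' 1 (j - 1) ++ List.range' 1 (i - 1)) := by
  rw [show wS2 GType.c m n i j = wrange m n 0 (j-1) ++ wrange m n 1 (i-1) from rfl,
    List.map_append, wrange_val (m := m) (n := n) 0 (j-1) (by omega), wrange_val (m := m) (n := n) 1 (i-1) (by omega)]
  have e1 : j - 1 + 1 - 0 = j := by omega
  have e2 : i - 1 + 1 - 1 = i - 1 := by omega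
  rw [e1, e2, range'_cons 0 j (by omega)]
  simp

lemma map_wS2_d {i j : ℕ} (h1 : 1 ≤ i) (h2 : i < j) (h3 : j ≤ m + n) :
    (wS2 GType.d m n i j).map Fin.val =
      0 :: (List.range' 2 (j - 2) ++ List.range' 1 (i - 1)) := by
  rw [show wS2 GType.d m n i j =
      wrange m n 0 0 ++ wrange m n 2 (j-1) ++ wrange m n 1 (i-1) from rfl,
    List.map_append, List.map_append, wrange_val (m := m) (n := n) 0 0 (by omega),
    wrange_val (m := m) (n := n) 2 (j-1) (by omega), wrange_val (m := m) (n := n) 1 (i-1) (by omega)]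
  have e1 : j - 1 + 1 - 2 = j - 2 := by omega
  have e2 : i - 1 + 1 - 1 = i - 1 := by omega
  rw [e1, e2]
  simp [List.range'_one]

lemma map_wS3_b {i : ℕ} (h1 : 1 ≤ i) (h3 : i ≤ m + n) :
    (wS3 GType.b m n i).map Fin.val = List.range' 0 i := by
  rw [show wS3 GType.b m n i = wrange m n 0 (i-1) from rfl, wrange_val (m := m) (n := n) 0 (i-1) (by omega)]
  congr 1
  omega

lemma map_wS3_c {i : ℕ} (h1 : 1 ≤ i) (h3 : i ≤ m + n) :
    (wS3 GType.c m n i).map Fin.val =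
      0 :: (List.range' 1 (i - 1) ++ List.range' 1 (i - 1)) := by
  rw [show wS3 GType.c m n i = wrange m n 0 (i-1) ++ wrange m n 1 (i-1) from rfl,
    List.map_append, wrange_val (m := m) (n := n) 0 (i-1) (by omega), wrange_val (m := m) (n := n) 1 (i-1) (by omega)]
  have e1 : i - 1 + 1 - 0 = i := by omega
  have e2 : i - 1 + 1 - 1 = i - 1 := by omega
  rw [e1, e2, range'_cons 0 i (by omega)]
  simp

lemma map_wS3_d {i : ℕ} (h1 : 1 ≤ i) (h3 : i ≤ m + n) :
    (wS3 GType.d m n i).map Fin.val =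
      0 :: (List.range' 2 (i - 2) ++ List.range' 1 (i - 1)) := by
  rw [show wS3 GType.d m n i =
      wrange m n 0 0 ++ wrange m n 2 (i-1) ++ wrange m n 1 (i-1) from rfl,
    List.map_append, List.map_append, wrange_val (m := m) (n := n) 0 0 (by omega),
    wrange_val (m := m) (n := n) 2 (i-1) (by omega), wrange_val (m := m) (n := n) 1 (i-1) (by omega)]
  have e1 : i - 1 + 1 - 2 = i - 2 := by omega
  have e2 : i - 1 + 1 - 1 = i - 1 := by omega
  rw [e1, e2]
  simp [List.range'_one]

lemma lyn_of_head (w t s : Word m n) (a : ℕ) (rest : List ℕ)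
    (hmap : w.map Fin.val = a :: rest) (hx : ∀ x ∈ rest, a < x)
    (hsplit : w = t ++ s) (ht : t ≠ []) (hs : s ≠ []) : wlt w s := by
  apply lex_map_val
  rw [hmap]
  refine lyn_head (t := t.map Fin.val) ?_ hx ?_ ?_
  · rw [← hmap, hsplit, List.map_append]
  · simpa using ht
  · simpa using hs

end Main

end OSP
namespace OSP

/-- Every word in `𝒢ℒ(𝔤)` is a Lyndon word (strictly smaller, in the
lexicographic order, than each of its proper nonempty suffixes), and the map
`𝒢ℒ(𝔤) → P`, `w = w[i_1,…,i_k] ↦ |w| = α_{i_1} + ⋯ + α_{i_k}`, is a bijection from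
`𝒢ℒ(𝔤)` onto the set `Φ⁺` of reduced positive roots. -/
theorem statement0 (g : GType) (m n : ℕ) (hm : 2 ≤ m) (hn : 1 ≤ n) :
    (∀ w ∈ GLw g m n, ∀ t s : Word m n, w = t ++ s → t ≠ [] → s ≠ [] → wlt w s) ∧
    Set.BijOn (wwt g m n) (GLw g m n) (PhiPlus g m n) := by
  constructor
  · -- Lyndon property
    intro w hw t s hsplit ht hs
    rcases classify hm hn hw with ⟨i, j, h1, h2, h3, rfl⟩ | ⟨i, j, h1, h2, h3, rfl⟩ |
      ⟨i, hd3, rfl⟩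
    · refine lyn_of_head _ t s i (List.range' (i + 1) (j - i - 1)) ?_ ?_ hsplit ht hs
      · rw [map_wS1 h1 h2 h3, range'_cons i (j - i) (by omega)]
      · intro x hx
        rw [List.mem_range'_1] at hx
        omega
    · cases g with
      | b =>
        apply lex_map_val
        rw [map_wS2_b h1 h2 h3]
        refine lyn_b h1 h2 (tL := t.map Fin.val) ?_ ?_ ?_
        · rw [← List.map_append, ← hsplit, map_wS2_b h1 h2 h3]
        · simpa using ht
        · simpa using hs
      | c =>
        refine lyn_of_head _ t s 0 _ (map_wS2_c h1 h2 h3) ?_ hsplit ht hs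
        intro x hx
        simp only [List.mem_append, List.mem_range'_1] at hx
        omega
      | d =>
        refine lyn_of_head _ t s 0 _ (map_wS2_d h1 h2 h3) ?_ hsplit ht hs
        intro x hx
        simp only [List.mem_append, List.mem_range'_1] at hx
        omega
    · obtain ⟨hb1, hb2, hbd⟩ := d3_bounds hm hn hd3
      cases g with
      | b =>
        refine lyn_of_head _ t s 0 (List.range' 1 (i - 1)) ?_ ?_ hsplit ht hs
        · rw [map_wS3_b hb1 hb2, range'_cons 0 i (by omega)]
        · intro x hx
          rw [List.mem_range'_1] at hx
          omega
      | c =>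
        refine lyn_of_head _ t s 0 _ (map_wS3_c hb1 hb2) ?_ hsplit ht hs
        intro x hx
        simp only [List.mem_append, List.mem_range'_1] at hx
        omega
      | d =>
        refine lyn_of_head _ t s 0 _ (map_wS3_d hb1 hb2) ?_ hsplit ht hs
        intro x hx
        simp only [List.mem_append, List.mem_range'_1] at hx
        omega
  · refine ⟨?_, ?_, ?_⟩
    · -- maps to
      intro w hw
      rcases classify hm hn hw with ⟨i, j, h1, h2, h3, rfl⟩ | ⟨i, j, h1, h2, h3, rfl⟩ |
        ⟨i, hd3, rfl⟩
      · rw [wwt_wS1 i j h1 h2 h3]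
        exact Or.inr ⟨i, j, h1, h2, h3, rfl⟩
      · rw [wwt_wS2 i j h1 h2 h3]
        refine Or.inl ⟨i, j, Or.inl ⟨h1, h2, h3⟩, ?_⟩
        rw [rt, if_neg (by omega)]
        rfl
      · obtain ⟨hb1, hb2, hbd⟩ := d3_bounds hm hn hd3
        rw [wwt_wS3 i hb1 hb2 hbd]
        refine Or.inl ⟨i, i, Or.inr ⟨rfl, ?_⟩, ?_⟩
        · cases g with
          | b => exact hd3
          | c => exact hd3
          | d => exact hd3
        · rw [rt, if_pos rfl]
          rfl
    · -- injective
      intro w1 hw1 w2 hw2 heq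
      rcases classify hm hn hw1 with ⟨i, j, h1, h2, h3, rfl⟩ | ⟨i, j, h1, h2, h3, rfl⟩ |
        ⟨i, hd3, rfl⟩
      · rcases classify hm hn hw2 with ⟨i', j', h1', h2', h3', rfl⟩ |
          ⟨i', j', h1', h2', h3', rfl⟩ | ⟨i', hd3', rfl⟩
        · rw [wwt_wS1 i j h1 h2 h3, wwt_wS1 i' j' h1' h2' h3'] at heq
          obtain ⟨e1, e2⟩ := S1_inj h1 h2 h3 h1' h2' h3' heq
          subst e1; subst e2; rfl
        · rw [wwt_wS1 i j h1 h2 h3, wwt_wS2 i' j' h1' h2' h3'] at heq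
          exact (S1_ne_S2 h1 h2 h3 heq).elim
        · obtain ⟨hb1', hb2', hbd'⟩ := d3_bounds hm hn hd3'
          rw [wwt_wS1 i j h1 h2 h3, wwt_wS3 i' hb1' hb2' hbd'] at heq
          exact (S1_ne_S3 h1 h2 h3 heq).elim
      · rcases classify hm hn hw2 with ⟨i', j', h1', h2', h3', rfl⟩ |
          ⟨i', j', h1', h2', h3', rfl⟩ | ⟨i', hd3', rfl⟩
        · rw [wwt_wS2 i j h1 h2 h3, wwt_wS1 i' j' h1' h2' h3'] at heq
          exact (S1_ne_S2 h1' h2' h3' heq.symm).elim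
        · rw [wwt_wS2 i j h1 h2 h3, wwt_wS2 i' j' h1' h2' h3'] at heq
          obtain ⟨e1, e2⟩ := S2_inj h1 h2 h3 h1' h2' h3' heq
          subst e1; subst e2; rfl
        · obtain ⟨hb1', hb2', hbd'⟩ := d3_bounds hm hn hd3'
          rw [wwt_wS2 i j h1 h2 h3, wwt_wS3 i' hb1' hb2' hbd'] at heq
          exact (S2_ne_S3 h1 h2 h3 hb1' hb2' heq).elim
      · obtain ⟨hb1, hb2, hbd⟩ := d3_bounds hm hn hd3
        rcases classify hm hn hw2 with ⟨i', j', h1', h2', h3', rfl⟩ |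
          ⟨i', j', h1', h2', h3', rfl⟩ | ⟨i', hd3', rfl⟩
        · rw [wwt_wS3 i hb1 hb2 hbd, wwt_wS1 i' j' h1' h2' h3'] at heq
          exact (S1_ne_S3 h1' h2' h3' heq.symm).elim
        · rw [wwt_wS3 i hb1 hb2 hbd, wwt_wS2 i' j' h1' h2' h3'] at heq
          exact (S2_ne_S3 h1' h2' h3' hb1 hb2 heq.symm).elim
        · obtain ⟨hb1', hb2', hbd'⟩ := d3_bounds hm hn hd3'
          rw [wwt_wS3 i hb1 hb2 hbd, wwt_wS3 i' hb1' hb2' hbd'] at heq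
          have e := S3_inj hb1 hb2 hb1' hb2' heq
          subst e; rfl
    · -- surjective
      intro p hp
      rcases hp with ⟨i, j, hu, rfl⟩ | ⟨i, j, h1, h2, h3, rfl⟩
      · rcases hu with ⟨h1, h2, h3⟩ | ⟨heqij, hmt⟩
        · refine ⟨wS2 g m n i j, memS2 hm hn i j h1 h2 h3, ?_⟩
          rw [wwt_wS2 i j h1 h2 h3, rt, if_neg (by omega)]
          rfl
        · subst heqij
          have hd3 : d3 g m n i := by
            cases g with
            | b => exact hmt
            | c => exact hmt
            | d => exact hmt
          obtain ⟨hb1, hb2, hbd⟩ := d3_bounds hm hn hd3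
          refine ⟨wS3 g m n i, memS3 hm hn i hd3, ?_⟩
          rw [wwt_wS3 i hb1 hb2 hbd, rt, if_pos rfl]
          rfl
      · exact ⟨wS1 m n i j, memS1 hm hn i j h1 h2 h3, wwt_wS1 i j h1 h2 h3⟩

end OSP
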